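/- Let T_∞^d be the complete d-ary tree with d ≥ 2, and T_n its truncation at height n. Then the growth rate of T_∞^d equals d, and the transfinite fractal dimension of the sequence {T_n} exists and equals (log d)/2. -/

import Mathlib

open Filter Finset

/-- A subgraph `B` of a graph `H` is an `ℓ`-box if any two of its vertices are at
distance at most `ℓ - 1` *within* `B`. -/
def SimpleGraph.IsBox {V : Type*} (H : SimpleGraph V) (ℓ : ℕ) (B : H.Subgraph) : Prop :=
  ∀ u v : B.verts, B.coe.Reachable u v ∧ B.coe.dist u v ≤ ℓ - 1

/-- `coveringNumber H ℓ` is the minimum number of `ℓ`-boxes whose vertex sets cover `H`. -/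
noncomputable def coveringNumber {V : Type*} (H : SimpleGraph V) (ℓ : ℕ) : ℕ :=
  sInf {m : ℕ | ∃ F : Finset H.Subgraph, F.card = m ∧ (∀ B ∈ F, H.IsBox ℓ B) ∧
    ∀ v : V, ∃ B ∈ F, v ∈ B.verts}

/-- Vertices of the spherically symmetric tree with offspring sequence `f`:
a vertex at depth `n` is a sequence of child-indices, the index chosen at depth `i`
lying in `Fin (f i)`. -/
def SSTVert (f : ℕ → ℕ) : Type := Σ n : ℕ, ∀ i : Fin n, Fin (f i)

/-- Parent-child relation of the spherically symmetric tree: `y` is a child of `x`. -/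
def SSTRel (f : ℕ → ℕ) (x y : SSTVert f) : Prop :=
  ∃ h : y.1 = x.1 + 1, ∀ i : Fin x.1, (x.2 i : ℕ) = (y.2 ⟨i.1, by omega⟩ : ℕ)

/-- The spherically symmetric tree with offspring sequence `f`, as a graph on all
vertices: every vertex at depth `h` has exactly `f h` children. -/
def SST (f : ℕ → ℕ) : SimpleGraph (SSTVert f) := SimpleGraph.fromRel (SSTRel f)

/-- The root of the spherically symmetric tree. -/
def SSTroot (f : ℕ → ℕ) : SSTVert f := ⟨0, fun i => i.elim0⟩

/-- The truncation `T_n` of the spherically symmetric tree at height `n`. -/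
def SSTtrunc (f : ℕ → ℕ) (n : ℕ) : SimpleGraph {v : SSTVert f // v.1 ≤ n} :=
  SimpleGraph.induce {v : SSTVert f | v.1 ≤ n} (SST f)

/-- `SSTgen f n` = number of vertices of the spherically symmetric tree at graph
distance `n` from the root (the size `L_n` of generation `n`). -/
noncomputable def SSTgen (f : ℕ → ℕ) (n : ℕ) : ℕ :=
  Nat.card {v : SSTVert f // (SST f).dist (SSTroot f) v = n}


/-! ### vertex API -/

variable {f : ℕ → ℕ}

def SSTpre (x : SSTVert f) (k : ℕ) : SSTVert f :=
  ⟨min k x.1, fun i => x.2 ⟨i.1, lt_of_lt_of_le i.2 (min_le_right _ _)⟩⟩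

@[simp] lemma SSTpre_fst (x : SSTVert f) (k : ℕ) : (SSTpre x k).1 = min k x.1 := rfl

lemma SSTVert.ext' {x y : SSTVert f} (h1 : x.1 = y.1)
    (h2 : ∀ (i : ℕ) (hx : i < x.1) (hy : i < y.1), (x.2 ⟨i, hx⟩ : ℕ) = (y.2 ⟨i, hy⟩ : ℕ)) :
    x = y := by
  obtain ⟨n, g⟩ := x
  obtain ⟨m, h⟩ := y
  obtain rfl : n = m := h1
  have hg : g = h := by
    funext i
    exact Fin.ext (h2 i.1 i.2 i.2)
  rw [hg]

lemma SSTpre_digit (x : SSTVert f) (k : ℕ) (i : ℕ) (h : i < min k x.1) (h2 : i < x.1) :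
    ((SSTpre x k).2 ⟨i, h⟩ : ℕ) = (x.2 ⟨i, h2⟩ : ℕ) := rfl

lemma SSTpre_of_le {x : SSTVert f} {k : ℕ} (h : x.1 ≤ k) : SSTpre x k = x := by
  apply SSTVert.ext' (by simp [min_eq_right h])
  intro i hx hy
  rfl

lemma SSTpre_pre {x : SSTVert f} {j k : ℕ} (h : j ≤ k) :
    SSTpre (SSTpre x k) j = SSTpre x j := by
  apply SSTVert.ext' (by simp; omega)
  intro i hx hy
  rfl

lemma SSTrel_pre {x : SSTVert f} {k : ℕ} (h : k + 1 = x.1) : SSTRel f (SSTpre x k) x := by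
  refine ⟨by simp; omega, fun i => ?_⟩
  rfl

lemma SST_adj_iff {x y : SSTVert f} :
    (SST f).Adj x y ↔ SSTRel f x y ∨ SSTRel f y x := by
  rw [SST, SimpleGraph.fromRel_adj]
  constructor
  · rintro ⟨-, h⟩; exact h
  · rintro h
    refine ⟨?_, h⟩
    rintro rfl
    rcases h with ⟨h, -⟩ | ⟨h, -⟩ <;> omega

lemma SST_adj_depth {x y : SSTVert f} (h : (SST f).Adj x y) :
    y.1 = x.1 + 1 ∨ x.1 = y.1 + 1 := by
  rcases SST_adj_iff.1 h with ⟨h, -⟩ | ⟨h, -⟩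
  · exact Or.inl h
  · exact Or.inr h

lemma SST_adj_pre {x y : SSTVert f} (h : (SST f).Adj x y) {k : ℕ} (hx : k ≤ x.1) (hy : k ≤ y.1) :
    SSTpre x k = SSTpre y k := by
  have key : ∀ a b : SSTVert f, SSTRel f a b → k ≤ a.1 → SSTpre a k = SSTpre b k := by
    rintro a b ⟨hd, hdig⟩ hk
    apply SSTVert.ext' (by simp; omega)
    intro i hxi hyi
    have hia : i < a.1 := by simp at hxi; omega
    have := hdig ⟨i, hia⟩
    exact this
  rcases SST_adj_iff.1 h with h' | h'
  · exact key _ _ h' hx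
  · exact (key _ _ h' hy).symm

lemma SST_walk_depth {x y : SSTVert f} (w : (SST f).Walk x y) :
    y.1 ≤ x.1 + w.length ∧ x.1 ≤ y.1 + w.length := by
  induction w with
  | nil => simp
  | cons h w ih =>
    rcases SST_adj_depth h with h' | h' <;>
      simp only [SimpleGraph.Walk.length_cons] <;> omega

lemma SST_walk_pre {k : ℕ} {x y : SSTVert f} (w : (SST f).Walk x y) :
    k ≤ x.1 → k ≤ y.1 → SSTpre x k ≠ SSTpre y k →
    x.1 + y.1 + 2 ≤ w.length + 2 * k := by
  induction w with
  | nil => intro _ _ hne; exact absurd rfl hne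
  | @cons a b c h w ih =>
    intro hx hy hne
    by_cases hb : k ≤ b.1
    · have hne' : SSTpre b k ≠ SSTpre c k := by
        rw [← SST_adj_pre h hx hb]; exact hne
      have hstep := ih hb hy hne'
      have := SST_adj_depth h
      simp only [SimpleGraph.Walk.length_cons]
      omega
    · have h1 := SST_adj_depth h
      have h2 := SST_walk_depth w
      simp only [SimpleGraph.Walk.length_cons]
      omega

lemma SST_exists_walk_pre (x : SSTVert f) (k : ℕ) (h : k ≤ x.1) :
    ∃ w : (SST f).Walk x (SSTpre x k), w.length = x.1 - k := by
  obtain ⟨m, hm⟩ : ∃ m, x.1 = k + m := ⟨x.1 - k, by omega⟩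
  clear h
  induction m generalizing x with
  | zero =>
    rw [show SSTpre x k = x from SSTpre_of_le (by omega)]
    exact ⟨SimpleGraph.Walk.nil, by rw [SimpleGraph.Walk.length_nil]; omega⟩
  | succ m ih =>
    have hadj : (SST f).Adj x (SSTpre x (k + m)) := by
      rw [SST_adj_iff]
      exact Or.inr (SSTrel_pre (by omega))
    obtain ⟨w, hw⟩ := ih (SSTpre x (k + m)) (by rw [SSTpre_fst]; omega)
    refine ⟨SimpleGraph.Walk.cons hadj (w.copy rfl (SSTpre_pre (by omega))), ?_⟩
    simp only [SimpleGraph.Walk.length_cons, SimpleGraph.Walk.length_copy, hw, SSTpre_fst]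
    omega
/-! ### Part 1 -/

lemma SSTroot_fst : (SSTroot f).1 = 0 := rfl

lemma SST_dist_root (v : SSTVert f) : (SST f).dist (SSTroot f) v = v.1 := by
  have hroot : SSTpre v 0 = SSTroot f := by
    apply SSTVert.ext' (by simp [SSTroot])
    intro i hx hy
    exact absurd hy (by simp [SSTroot])
  obtain ⟨w, hw⟩ := SST_exists_walk_pre v 0 (by omega)
  apply le_antisymm
  · have := SimpleGraph.dist_le ((w.copy rfl hroot).reverse)
    simpa [hw] using this
  · obtain ⟨p, hp⟩ :=
      (SimpleGraph.Walk.reachable ((w.copy rfl hroot).reverse)).exists_walk_length_eq_dist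
    have := (SST_walk_depth p).1
    rw [hp] at this
    simpa [SSTroot] using this

lemma SSTgen_eq (d n : ℕ) : SSTgen (fun _ => d) n = d ^ n := by
  rw [SSTgen]
  have e1 : {v : SSTVert (fun _ => d) // (SST _).dist (SSTroot _) v = n} ≃
      {v : SSTVert (fun _ => d) // v.1 = n} :=
    Equiv.subtypeEquivRight (fun v => by rw [SST_dist_root])
  have e2 : {v : SSTVert (fun _ => d) // v.1 = n} ≃ (Fin n → Fin d) := by
    refine ⟨fun v => fun i => v.1.2 ⟨i.1, by rw [v.2]; exact i.2⟩,
      fun g => ⟨⟨n, g⟩, rfl⟩, ?_, ?_⟩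
    · rintro ⟨⟨m, h⟩, hm⟩
      apply Subtype.ext
      apply SSTVert.ext' (by simpa using hm.symm)
      intro i hx hy
      rfl
    · intro g
      funext i
      rfl
  rw [Nat.card_congr (e1.trans e2), Nat.card_eq_fintype_card]
  simp

lemma growth_limit (d : ℕ) (hd : 2 ≤ d) :
    Tendsto (fun n : ℕ => (SSTgen (fun _ => d) n : ℝ) ^ ((n : ℝ)⁻¹))
      atTop (nhds (d : ℝ)) := by
  apply Tendsto.congr' _ (tendsto_const_nhds (x := (d : ℝ)))
  filter_upwards [eventually_ge_atTop 1] with n hn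
  rw [SSTgen_eq]
  push_cast
  rw [← Real.rpow_natCast (d : ℝ) n, ← Real.rpow_mul (by positivity : (0:ℝ) ≤ (d:ℝ)),
    mul_inv_cancel₀ (by exact_mod_cast Nat.one_le_iff_ne_zero.mp hn : (n:ℝ) ≠ 0),
    Real.rpow_one]

lemma card_trunc (d n : ℕ) :
    Nat.card {v : SSTVert (fun _ => d) // v.1 ≤ n} = ∑ k ∈ Finset.range (n + 1), d ^ k := by
  have e : {v : SSTVert (fun _ => d) // v.1 ≤ n} ≃ Σ k : Fin (n + 1), (Fin k.1 → Fin d) := by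
    refine ⟨fun v => ⟨⟨v.1.1, Nat.lt_succ_of_le v.2⟩, v.1.2⟩,
      fun p => ⟨⟨p.1.1, p.2⟩, Nat.lt_succ_iff.mp p.1.2⟩, ?_, ?_⟩
    · rintro ⟨⟨m, g⟩, hm⟩; rfl
    · rintro ⟨⟨k, hk⟩, g⟩; rfl
  rw [Nat.card_congr e, Nat.card_eq_fintype_card, Fintype.card_sigma]
  rw [Fin.sum_univ_eq_sum_range (fun k => Fintype.card (Fin k → Fin d))]
  congr 1
  funext k
  simp
/-! ### Boxes -/

section Boxes

variable {d n : ℕ} {c : SSTVert (fun _ => d)} {lo hi : ℕ}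

lemma trunc_adj {u v : {v : SSTVert (fun _ => d) // v.1 ≤ n}} :
    (SSTtrunc (fun _ => d) n).Adj u v ↔ (SST (fun _ => d)).Adj u.1 v.1 := Iff.rfl

lemma compat_pre {x : SSTVert (fun _ => d)} (h : SSTpre x c.1 = SSTpre c x.1) {k : ℕ}
    (hk : k ≤ x.1) : SSTpre (SSTpre x k) c.1 = SSTpre c (SSTpre x k).1 := by
  have hzk : (SSTpre x k).1 = k := by rw [SSTpre_fst]; omega
  rw [hzk]
  rcases le_total c.1 k with h1 | h1
  · rw [SSTpre_pre h1, h, SSTpre_of_le (by omega), SSTpre_of_le (by omega)]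
  · have hcg := congrArg (fun z => SSTpre z k) h
    simp only at hcg
    rw [SSTpre_pre h1, SSTpre_pre hk] at hcg
    rw [SSTpre_of_le (by rw [SSTpre_fst]; omega)]
    exact hcg

lemma comparable_of_le {x y : SSTVert (fun _ => d)}
    (hx : SSTpre x c.1 = SSTpre c x.1) (hy : SSTpre y c.1 = SSTpre c y.1)
    (hxy : x.1 ≤ y.1) (hxc : x.1 ≤ c.1) : SSTpre y x.1 = x := by
  have hx' : x = SSTpre c x.1 := by rw [← hx, SSTpre_of_le hxc]
  have hcg := congrArg (fun z => SSTpre z x.1) hy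
  simp only at hcg
  rw [SSTpre_pre hxc, SSTpre_pre hxy] at hcg
  rw [hcg, ← hx']

def boxSet (n : ℕ) (c : SSTVert (fun _ => d)) (lo hi : ℕ) :
    Set {v : SSTVert (fun _ => d) // v.1 ≤ n} :=
  {v | lo ≤ v.1.1 ∧ v.1.1 ≤ hi ∧ SSTpre v.1 c.1 = SSTpre c v.1.1}

def boxSub (n : ℕ) (c : SSTVert (fun _ => d)) (lo hi : ℕ) :
    (SSTtrunc (fun _ => d) n).Subgraph :=
  (⊤ : (SSTtrunc (fun _ => d) n).Subgraph).induce (boxSet n c lo hi)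

lemma boxSub_verts : (boxSub n c lo hi).verts = boxSet n c lo hi := rfl

def preMem (v : {v : SSTVert (fun _ => d) // v.1 ≤ n}) (k : ℕ) :
    {v : SSTVert (fun _ => d) // v.1 ≤ n} :=
  ⟨SSTpre v.1 k, le_trans (min_le_right k v.1.1) v.2⟩

lemma preMem_mem {v : {v : SSTVert (fun _ => d) // v.1 ≤ n}} (hv : v ∈ boxSet n c lo hi)
    {k : ℕ} (hk1 : lo ≤ k) (hk2 : k ≤ v.1.1) : preMem v k ∈ boxSet n c lo hi := by
  obtain ⟨h1, h2, h3⟩ := hv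
  refine ⟨?_, ?_, compat_pre h3 hk2⟩
  · show lo ≤ (SSTpre v.1 k).1
    rw [SSTpre_fst]; omega
  · show (SSTpre v.1 k).1 ≤ hi
    rw [SSTpre_fst]; omega

lemma box_chain : ∀ (m : ℕ) (v : {v : SSTVert (fun _ => d) // v.1 ≤ n})
      (hv : v ∈ boxSet n c lo hi) (k : ℕ) (hk1 : lo ≤ k) (hm : v.1.1 = k + m),
      ∃ w : (boxSub n c lo hi).coe.Walk ⟨v, hv⟩
        ⟨preMem v k, preMem_mem hv hk1 (by omega)⟩, w.length ≤ m := by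
  intro m
  induction m with
  | zero =>
    intro v hv k hk1 hm
    have hvk : preMem v k = v := Subtype.ext (SSTpre_of_le (by omega))
    exact ⟨SimpleGraph.Walk.nil.copy rfl (Subtype.ext hvk.symm), by simp⟩
  | succ m ih =>
    intro v hv k hk1 hm
    have hv' : preMem v (k + m) ∈ boxSet n c lo hi := preMem_mem hv (by omega) (by omega)
    have hadj : (boxSub n c lo hi).coe.Adj ⟨v, hv⟩ ⟨preMem v (k + m), hv'⟩ := by
      rw [SimpleGraph.Subgraph.coe_adj]
      refine ⟨hv, hv', ?_⟩
      rw [SimpleGraph.Subgraph.top_adj, trunc_adj, SST_adj_iff]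
      exact Or.inr (SSTrel_pre (by omega))
    obtain ⟨w, hw⟩ := ih (preMem v (k + m)) hv' k hk1 (by show min _ _ = _; omega)
    have hee : preMem (preMem v (k + m)) k = preMem v k :=
      Subtype.ext (SSTpre_pre (by omega))
    refine ⟨(SimpleGraph.Walk.cons hadj w).copy rfl (Subtype.ext hee), ?_⟩
    rw [SimpleGraph.Walk.length_copy, SimpleGraph.Walk.length_cons]
    omega

lemma boxSub_isBox {ℓ : ℕ} (hl : 1 ≤ ℓ) (hn : hi ≤ n) (hlc : lo ≤ c.1) (hch : c.1 ≤ hi)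
    (h2 : 2 * (hi - c.1) ≤ ℓ - 1) (hwin : hi - lo ≤ ℓ - 1) :
    (SSTtrunc (fun _ => d) n).IsBox ℓ (boxSub n c lo hi) := by
  have key : ∀ (u v : {v : SSTVert (fun _ => d) // v.1 ≤ n})
      (hu : u ∈ boxSet n c lo hi) (hv : v ∈ boxSet n c lo hi), u.1.1 ≤ v.1.1 →
      ∃ w : (boxSub n c lo hi).coe.Walk ⟨u, hu⟩ ⟨v, hv⟩, w.length ≤ ℓ - 1 := by
    intro u v hu hv huv
    by_cases hcase : u.1.1 ≤ c.1
    · have hcomp : SSTpre v.1 u.1.1 = u.1 :=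
        comparable_of_le hu.2.2 hv.2.2 huv hcase
      obtain ⟨w, hw⟩ := box_chain (v.1.1 - u.1.1) v hv u.1.1 hu.1 (by omega)
      have he : (⟨preMem v u.1.1, preMem_mem hv hu.1 (by omega)⟩ :
          (boxSub n c lo hi).verts) = ⟨u, hu⟩ := Subtype.ext (Subtype.ext hcomp)
      refine ⟨(w.copy rfl he).reverse, ?_⟩
      rw [SimpleGraph.Walk.length_reverse, SimpleGraph.Walk.length_copy]
      have := hu.2.1; have := hv.2.1; have := hu.1; omega
    · push_neg at hcase
      obtain ⟨wu, hwu⟩ := box_chain (u.1.1 - c.1) u hu c.1 hlc (by omega)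
      obtain ⟨wv, hwv⟩ := box_chain (v.1.1 - c.1) v hv c.1 hlc (by omega)
      have heq : preMem v c.1 = preMem u c.1 := by
        apply Subtype.ext
        show SSTpre v.1 c.1 = SSTpre u.1 c.1
        rw [hv.2.2, hu.2.2, SSTpre_of_le (by omega), SSTpre_of_le (by omega)]
      refine ⟨wu.append (wv.copy rfl (Subtype.ext heq)).reverse, ?_⟩
      rw [SimpleGraph.Walk.length_append, SimpleGraph.Walk.length_reverse,
        SimpleGraph.Walk.length_copy]
      have := hu.2.1; have := hv.2.1
      omega
  rintro ⟨u, hu⟩ ⟨v, hv⟩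
  rcases le_total u.1.1 v.1.1 with h | h
  · obtain ⟨w, hw⟩ := key u v hu hv h
    exact ⟨w.reachable, le_trans (SimpleGraph.dist_le w) hw⟩
  · obtain ⟨w, hw⟩ := key v u hv hu h
    refine ⟨w.reachable.symm, ?_⟩
    rw [SimpleGraph.dist_comm]
    exact le_trans (SimpleGraph.dist_le w) hw

end Boxes
/-! ### Lower bound tools -/

def truncHom (d n : ℕ) : SSTtrunc (fun _ => d) n →g SST (fun _ => d) :=
  ⟨Subtype.val, fun {a b} h => trunc_adj.mp h⟩

lemma SSTVert.digit_eq {f : ℕ → ℕ} {x y : SSTVert f} (h : x = y) (i : ℕ)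
    (hx : i < x.1) (hy : i < y.1) : (x.2 ⟨i, hx⟩ : ℕ) = (y.2 ⟨i, hy⟩ : ℕ) := by
  subst h; rfl

lemma box_walk {d n ℓ : ℕ} {B : (SSTtrunc (fun _ => d) n).Subgraph}
    (hB : (SSTtrunc (fun _ => d) n).IsBox ℓ B)
    {u v : {v : SSTVert (fun _ => d) // v.1 ≤ n}} (hu : u ∈ B.verts) (hv : v ∈ B.verts) :
    ∃ w : (SST (fun _ => d)).Walk u.1 v.1, w.length ≤ ℓ - 1 := by
  obtain ⟨hr, hdist⟩ := hB ⟨u, hu⟩ ⟨v, hv⟩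
  obtain ⟨p, hp⟩ := hr.exists_walk_length_eq_dist
  refine ⟨(p.map B.hom).map (truncHom d n), ?_⟩
  have h1 := SimpleGraph.Walk.length_map (truncHom d n) (p.map B.hom)
  have h2 := SimpleGraph.Walk.length_map B.hom p
  exact le_trans (le_of_eq (h1.trans (h2.trans hp))) hdist

lemma box_sep {d n ℓ : ℕ} {B : (SSTtrunc (fun _ => d) n).Subgraph}
    (hB : (SSTtrunc (fun _ => d) n).IsBox ℓ B)
    {u v : {v : SSTVert (fun _ => d) // v.1 ≤ n}} (hu : u ∈ B.verts) (hv : v ∈ B.verts) :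
    u.1.1 ≤ v.1.1 + (ℓ - 1) ∧ v.1.1 ≤ u.1.1 + (ℓ - 1) := by
  obtain ⟨w, hw⟩ := box_walk hB hu hv
  have := SST_walk_depth w
  omega

lemma box_pre {d n ℓ : ℕ} {B : (SSTtrunc (fun _ => d) n).Subgraph}
    (hB : (SSTtrunc (fun _ => d) n).IsBox ℓ B)
    {u v : {v : SSTVert (fun _ => d) // v.1 ≤ n}} (hu : u ∈ B.verts) (hv : v ∈ B.verts)
    {k : ℕ} (hk1 : k ≤ u.1.1) (hk2 : k ≤ v.1.1)
    (hbig : ℓ - 1 + 2 * k < u.1.1 + v.1.1 + 2) : SSTpre u.1 k = SSTpre v.1 k := by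
  by_contra hne
  obtain ⟨w, hw⟩ := box_walk hB hu hv
  have := SST_walk_pre w hk1 hk2 hne
  omega

/-! ### padded vertices -/

def padV (d m t : ℕ) (hd0 : 0 < d) (hm : m ≤ t) (p : Fin m → Fin d) : SSTVert (fun _ => d) :=
  ⟨t, fun i => if h : i.1 < m then p ⟨i.1, h⟩ else ⟨0, hd0⟩⟩

lemma padV_fst {d m t : ℕ} (hd0 : 0 < d) (hm : m ≤ t) (p : Fin m → Fin d) :
    (padV d m t hd0 hm p).1 = t := rfl

lemma padV_digit {d m t : ℕ} (hd0 : 0 < d) (hm : m ≤ t) (p : Fin m → Fin d)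
    {i : ℕ} (h : i < t) (hit : i < m) :
    ((padV d m t hd0 hm p).2 ⟨i, h⟩ : ℕ) = (p ⟨i, hit⟩ : ℕ) := by
  show ((if h : i < m then p ⟨i, h⟩ else ⟨0, hd0⟩ : Fin d) : ℕ) = _
  rw [dif_pos hit]

/-! ### The covering number -/

def covC (d n ℓ : ℕ) : ℕ := ∑ j ∈ Finset.range (n / ℓ + 1), d ^ (n - j * ℓ - (ℓ - 1) / 2)

lemma cov_lower {d n ℓ : ℕ} (hd : 2 ≤ d) (hl : 1 ≤ ℓ)
    (F : Finset (SSTtrunc (fun _ => d) n).Subgraph)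
    (hbox : ∀ B ∈ F, (SSTtrunc (fun _ => d) n).IsBox ℓ B)
    (hcov : ∀ v : {v : SSTVert (fun _ => d) // v.1 ≤ n}, ∃ B ∈ F, v ∈ B.verts) :
    covC d n ℓ ≤ F.card := by
  classical
  choose g hgF hgmem using hcov
  set r := (ℓ - 1) / 2 with hrdef
  have hr2 : 2 * r ≤ ℓ - 1 ∧ ℓ - 1 ≤ 2 * r + 1 := by omega
  have hd0 : 0 < d := by omega
  let leaf : (j : ℕ) → (Fin (n - j * ℓ - r) → Fin d) → {v : SSTVert (fun _ => d) // v.1 ≤ n} :=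
    fun j p => ⟨padV d (n - j * ℓ - r) (n - j * ℓ) hd0 (by omega) p, by show n - j * ℓ ≤ n; omega⟩
  let A : ℕ → Finset (SSTtrunc (fun _ => d) n).Subgraph :=
    fun j => Finset.image (fun p => g (leaf j p)) Finset.univ
  have hAcard : ∀ j, (A j).card = d ^ (n - j * ℓ - r) := by
    intro j
    rw [Finset.card_image_of_injective _ ?_, Finset.card_univ, Fintype.card_fun,
      Fintype.card_fin, Fintype.card_fin]
    intro p p' hpp
    by_cases ht : n - j * ℓ - r = 0
    · funext i
      exact absurd i.2 (by omega)
    · have hmem1 := hgmem (leaf j p)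
      have hmem2 := hgmem (leaf j p')
      have hpp' : g (leaf j p) = g (leaf j p') := hpp
      rw [hpp'] at hmem1
      have hpre := box_pre (hbox _ (hgF (leaf j p'))) hmem1 hmem2
        (k := n - j * ℓ - r) (by show _ ≤ n - j * ℓ; omega) (by show _ ≤ n - j * ℓ; omega)
        (by show ℓ - 1 + 2 * _ < (n - j * ℓ) + (n - j * ℓ) + 2; omega)
      funext i
      apply Fin.ext
      have e1 : (leaf j p).1.1 = n - j * ℓ := rfl
      have e2 : (leaf j p').1.1 = n - j * ℓ := rfl
      have h1 : i.1 < min (n - j * ℓ - r) (n - j * ℓ) := by omega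
      have step1 : ((SSTpre ((leaf j p) : {v : SSTVert (fun _ => d) // v.1 ≤ n}).1
          (n - j * ℓ - r)).2 ⟨i.1, h1⟩ : ℕ) = (p i : ℕ) := by
        simp only [leaf]
        exact padV_digit (m := n - j * ℓ - r) (t := n - j * ℓ) hd0 (by omega) p (i := i.1)
          (by omega) i.2
      have step2 : ((SSTpre ((leaf j p') : {v : SSTVert (fun _ => d) // v.1 ≤ n}).1
          (n - j * ℓ - r)).2 ⟨i.1, h1⟩ : ℕ) = (p' i : ℕ) := by
        simp only [leaf]
        exact padV_digit (m := n - j * ℓ - r) (t := n - j * ℓ) hd0 (by omega) p' (i := i.1)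
          (by omega) i.2
      exact (step1.symm.trans (SSTVert.digit_eq hpre i.1 h1 h1)).trans step2
  have hAdisj : ∀ j ∈ Finset.range (n / ℓ + 1), ∀ j' ∈ Finset.range (n / ℓ + 1), j ≠ j' →
      Disjoint (A j) (A j') := by
    intro j hj j' hj' hne
    rw [Finset.disjoint_left]
    rintro B hB hB'
    obtain ⟨p, -, rfl⟩ := Finset.mem_image.mp hB
    obtain ⟨p', -, hp'⟩ := Finset.mem_image.mp hB'
    have hmem1 := hgmem (leaf j p)
    have hmem2 := hgmem (leaf j' p')
    rw [hp'] at hmem2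
    have hsep := box_sep (hbox _ (hgF (leaf j p))) hmem1 hmem2
    have hjl : j * ℓ ≤ n := by
      rw [Finset.mem_range] at hj
      calc j * ℓ ≤ (n / ℓ) * ℓ := Nat.mul_le_mul_right ℓ (by omega)
      _ ≤ n := Nat.div_mul_le_self n ℓ
    have hjl' : j' * ℓ ≤ n := by
      rw [Finset.mem_range] at hj'
      calc j' * ℓ ≤ (n / ℓ) * ℓ := Nat.mul_le_mul_right ℓ (by omega)
      _ ≤ n := Nat.div_mul_le_self n ℓ
    have hgap : j * ℓ + ℓ ≤ j' * ℓ ∨ j' * ℓ + ℓ ≤ j * ℓ := by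
      rcases Nat.lt_or_ge j j' with h | h
      · left
        calc j * ℓ + ℓ = (j + 1) * ℓ := by ring
        _ ≤ j' * ℓ := Nat.mul_le_mul_right ℓ (by omega)
      · right
        calc j' * ℓ + ℓ = (j' + 1) * ℓ := by ring
        _ ≤ j * ℓ := Nat.mul_le_mul_right ℓ (by omega)
    have e1 : (leaf j p).1.1 = n - j * ℓ := rfl
    have e2 : (leaf j' p').1.1 = n - j' * ℓ := rfl
    rw [e1, e2] at hsep
    omega
  calc covC d n ℓ = ∑ j ∈ Finset.range (n / ℓ + 1), (A j).card := by
        rw [covC]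
        exact Finset.sum_congr rfl (fun j _ => (hAcard j).symm)
    _ = ((Finset.range (n / ℓ + 1)).biUnion A).card := (Finset.card_biUnion hAdisj).symm
    _ ≤ F.card := by
        apply Finset.card_le_card
        intro B hB
        rw [Finset.mem_biUnion] at hB
        obtain ⟨j, -, hBj⟩ := hB
        obtain ⟨p, -, rfl⟩ := Finset.mem_image.mp hBj
        exact hgF _
lemma cov_cover {d n ℓ : ℕ} (hd : 2 ≤ d) (hl : 1 ≤ ℓ)
    (v : {v : SSTVert (fun _ => d) // v.1 ≤ n}) :
    ∃ j < n / ℓ + 1, ∃ p : Fin (n - j * ℓ - (ℓ - 1) / 2) → Fin d,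
      v ∈ boxSet n ⟨n - j * ℓ - (ℓ - 1) / 2, p⟩ (n - j * ℓ + 1 - ℓ) (n - j * ℓ) := by
  have hd0 : 0 < d := by omega
  set r := (ℓ - 1) / 2 with hrdef
  set j := (n - v.1.1) / ℓ with hj
  have hmod : ℓ * j + (n - v.1.1) % ℓ = n - v.1.1 := Nat.div_add_mod _ _
  have hmod' : j * ℓ + (n - v.1.1) % ℓ = n - v.1.1 := by rw [mul_comm] at hmod; exact hmod
  have hmodlt : (n - v.1.1) % ℓ < ℓ := Nat.mod_lt _ (by omega)
  have hvn : v.1.1 ≤ n := v.2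
  have hjq : j ≤ n / ℓ := Nat.div_le_div_right (by omega)
  have hjn : j * ℓ ≤ n := by omega
  refine ⟨j, by omega, fun i => if h : i.1 < v.1.1 then v.1.2 ⟨i.1, h⟩ else ⟨0, hd0⟩,
    by show n - j * ℓ + 1 - ℓ ≤ v.1.1; omega, by show v.1.1 ≤ n - j * ℓ; omega, ?_⟩
  show SSTpre v.1 (n - j * ℓ - r) = _
  apply SSTVert.ext'
  · show min (n - j * ℓ - r) v.1.1 = min v.1.1 (n - j * ℓ - r)
    omega
  · intro i hx hy
    change i < min (n - j * ℓ - r) v.1.1 at hx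
    change i < min v.1.1 (n - j * ℓ - r) at hy
    have h2 : i < v.1.1 := by omega
    have h3 : i < n - j * ℓ - r := by omega
    show (v.1.2 ⟨i, h2⟩ : ℕ) =
      ((if h : i < v.1.1 then v.1.2 ⟨i, h⟩ else ⟨0, hd0⟩ : Fin d) : ℕ)
    rw [dif_pos h2]

lemma cov_upper {d : ℕ} (n : ℕ) {ℓ : ℕ} (hd : 2 ≤ d) (hl : 1 ≤ ℓ) :
    ∃ F : Finset (SSTtrunc (fun _ => d) n).Subgraph,
      (∀ B ∈ F, (SSTtrunc (fun _ => d) n).IsBox ℓ B) ∧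
      (∀ v : {v : SSTVert (fun _ => d) // v.1 ≤ n}, ∃ B ∈ F, v ∈ B.verts) ∧
      F.card ≤ covC d n ℓ := by
  classical
  set r := (ℓ - 1) / 2 with hrdef
  have hr1 : 2 * r ≤ ℓ - 1 := by omega
  refine ⟨(Finset.range (n / ℓ + 1)).biUnion (fun j => Finset.image
    (fun p : Fin (n - j * ℓ - r) → Fin d =>
      boxSub n ⟨n - j * ℓ - r, p⟩ (n - j * ℓ + 1 - ℓ) (n - j * ℓ)) Finset.univ), ?_, ?_, ?_⟩
  · intro B hB
    simp only [Finset.mem_biUnion, Finset.mem_image, Finset.mem_range] at hB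
    obtain ⟨j, hj, p, -, rfl⟩ := hB
    refine boxSub_isBox hl (by omega) ?_ ?_ ?_ ?_
    · show n - j * ℓ + 1 - ℓ ≤ n - j * ℓ - r
      omega
    · show n - j * ℓ - r ≤ n - j * ℓ
      omega
    · show 2 * ((n - j * ℓ) - (n - j * ℓ - r)) ≤ ℓ - 1
      omega
    · show (n - j * ℓ) - (n - j * ℓ + 1 - ℓ) ≤ ℓ - 1
      omega
  · intro v
    obtain ⟨j, hj, p, hmem⟩ := cov_cover hd hl v
    exact ⟨_, Finset.mem_biUnion.mpr ⟨j, Finset.mem_range.mpr hj,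
      Finset.mem_image.mpr ⟨p, Finset.mem_univ _, rfl⟩⟩, hmem⟩
  · apply le_trans (Finset.card_biUnion_le)
    apply Finset.sum_le_sum
    intro j _
    apply le_trans Finset.card_image_le
    apply le_of_eq
    rw [Finset.card_univ, Fintype.card_fun, Fintype.card_fin, Fintype.card_fin]

theorem covNum_eq {d : ℕ} (n : ℕ) {ℓ : ℕ} (hd : 2 ≤ d) (hl : 1 ≤ ℓ) :
    coveringNumber (SSTtrunc (fun _ => d) n) ℓ = covC d n ℓ := by
  obtain ⟨F, hbox, hcov, hcard⟩ := cov_upper n hd hl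
  rw [coveringNumber]
  apply le_antisymm
  · refine le_trans (Nat.sInf_le ?_) hcard
    exact ⟨F, rfl, hbox, hcov⟩
  · refine le_csInf ⟨F.card, F, rfl, hbox, hcov⟩ ?_
    rintro m ⟨F', rfl, hbox', hcov'⟩
    exact cov_lower hd hl F' hbox' hcov'
/-! ### Analysis -/

lemma geom_aux {d : ℕ} (hd : 2 ≤ d) {ℓ : ℕ} (hl : 1 ≤ ℓ) (s : ℕ) (q : ℕ) :
    ∑ j ∈ Finset.range (q + 1), ((d : ℝ)) ^ (q * ℓ + s - j * ℓ - (ℓ - 1) / 2) =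
      (d : ℝ) ^ (ℓ - (ℓ - 1) / 2) * (d : ℝ) ^ (q * ℓ + s) / ((d : ℝ) ^ ℓ - 1) +
      ((d : ℝ) ^ (s - (ℓ - 1) / 2) -
        (d : ℝ) ^ (s + (ℓ - (ℓ - 1) / 2)) / ((d : ℝ) ^ ℓ - 1)) := by
  have hX1 : (1 : ℝ) < (d : ℝ) := by exact_mod_cast (by omega : 1 < d)
  have hD : (0 : ℝ) < (d : ℝ) ^ ℓ - 1 := by
    have := one_lt_pow₀ hX1 (by omega : ℓ ≠ 0)
    linarith
  have hD' : ((d : ℝ) ^ ℓ - 1) ≠ 0 := ne_of_gt hD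
  have hr : (ℓ - 1) / 2 ≤ ℓ - 1 := Nat.div_le_self _ _
  induction q with
  | zero =>
    rw [Finset.sum_range_one]
    simp only [zero_mul, zero_add]
    rw [show s - 0 - (ℓ - 1) / 2 = s - (ℓ - 1) / 2 by omega]
    have hpow : (d : ℝ) ^ (ℓ - (ℓ - 1) / 2) * (d : ℝ) ^ s = (d : ℝ) ^ (s + (ℓ - (ℓ - 1) / 2)) := by
      rw [← pow_add]
      congr 1
      omega
    rw [hpow]
    ring
  | succ q ih =>
    rw [Finset.sum_range_succ']
    have hexp : ∀ j : ℕ, (q + 1) * ℓ + s - (j + 1) * ℓ - (ℓ - 1) / 2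
        = q * ℓ + s - j * ℓ - (ℓ - 1) / 2 := by
      intro j
      have h1 : (q + 1) * ℓ = q * ℓ + ℓ := by ring
      have h2 : (j + 1) * ℓ = j * ℓ + ℓ := by ring
      omega
    simp only [hexp]
    rw [ih]
    have h3 : (q + 1) * ℓ + s - 0 * ℓ - (ℓ - 1) / 2 = (ℓ - (ℓ - 1) / 2) + (q * ℓ + s) := by
      have h1 : (q + 1) * ℓ = q * ℓ + ℓ := by ring
      omega
    rw [h3, pow_add]
    have h4 : (q + 1) * ℓ + s = ℓ + (q * ℓ + s) := by ring
    rw [h4, pow_add]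
    field_simp
    ring

lemma covC_err {d : ℕ} (hd : 2 ≤ d) {ℓ : ℕ} (hl : 1 ≤ ℓ) (n : ℕ) :
    |(covC d n ℓ : ℝ) - (d : ℝ) ^ (ℓ - (ℓ - 1) / 2) / ((d : ℝ) ^ ℓ - 1) * (d : ℝ) ^ n| ≤
      (d : ℝ) ^ ℓ + (d : ℝ) ^ (2 * ℓ) := by
  have hX1 : (1 : ℝ) < (d : ℝ) := by exact_mod_cast (by omega : 1 < d)
  have hX0 : (0 : ℝ) < (d : ℝ) := by linarith
  have hXl2 : (2 : ℝ) ≤ (d : ℝ) ^ ℓ := by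
    calc (2 : ℝ) ≤ (d : ℝ) := by exact_mod_cast hd
    _ ≤ (d : ℝ) ^ ℓ := le_self_pow₀ (le_of_lt hX1) (by omega)
  have hD : (0 : ℝ) < (d : ℝ) ^ ℓ - 1 := by linarith
  have hcast : (covC d n ℓ : ℝ) = ∑ j ∈ Finset.range (n / ℓ + 1),
      (d : ℝ) ^ (n - j * ℓ - (ℓ - 1) / 2) := by
    rw [covC]
    push_cast
    rfl
  have hqs : n / ℓ * ℓ + n % ℓ = n := by
    rw [mul_comm (n / ℓ) ℓ]
    exact Nat.div_add_mod n ℓ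
  have key := geom_aux hd hl (n % ℓ) (n / ℓ)
  rw [hqs] at key
  rw [hcast, key]
  rw [show (d : ℝ) ^ (ℓ - (ℓ - 1) / 2) * (d : ℝ) ^ n / ((d : ℝ) ^ ℓ - 1) +
      ((d : ℝ) ^ (n % ℓ - (ℓ - 1) / 2) -
        (d : ℝ) ^ (n % ℓ + (ℓ - (ℓ - 1) / 2)) / ((d : ℝ) ^ ℓ - 1)) -
      (d : ℝ) ^ (ℓ - (ℓ - 1) / 2) / ((d : ℝ) ^ ℓ - 1) * (d : ℝ) ^ n =
      (d : ℝ) ^ (n % ℓ - (ℓ - 1) / 2) -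
        (d : ℝ) ^ (n % ℓ + (ℓ - (ℓ - 1) / 2)) / ((d : ℝ) ^ ℓ - 1) from by ring]
  have hmod : n % ℓ < ℓ := Nat.mod_lt _ (by omega)
  refine le_trans (abs_sub _ _) ?_
  have h1 : |(d : ℝ) ^ (n % ℓ - (ℓ - 1) / 2)| ≤ (d : ℝ) ^ ℓ := by
    rw [abs_of_pos (pow_pos hX0 _)]
    exact pow_le_pow_right₀ (le_of_lt hX1) (by omega)
  have h2 : |(d : ℝ) ^ (n % ℓ + (ℓ - (ℓ - 1) / 2)) / ((d : ℝ) ^ ℓ - 1)| ≤ (d : ℝ) ^ (2 * ℓ) := by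
    rw [abs_of_pos (div_pos (pow_pos hX0 _) hD)]
    calc (d : ℝ) ^ (n % ℓ + (ℓ - (ℓ - 1) / 2)) / ((d : ℝ) ^ ℓ - 1)
        ≤ (d : ℝ) ^ (n % ℓ + (ℓ - (ℓ - 1) / 2)) := by
          apply div_le_self (le_of_lt (pow_pos hX0 _))
          linarith
    _ ≤ (d : ℝ) ^ (2 * ℓ) := pow_le_pow_right₀ (le_of_lt hX1) (by omega)
  exact add_le_add h1 h2

lemma G_one_le (d n : ℕ) (hd : 2 ≤ d) : 1 ≤ ∑ k ∈ Finset.range (n + 1), d ^ k := by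
  have h0 : (0:ℕ) ∈ Finset.range (n + 1) := Finset.mem_range.mpr (by omega)
  have := Finset.single_le_sum (f := fun k => d ^ k) (fun i _ => Nat.zero_le _) h0
  simpa using this

lemma G_err {d : ℕ} (hd : 2 ≤ d) (n : ℕ) :
    |((∑ k ∈ Finset.range (n + 1), d ^ k : ℕ) : ℝ) - (d : ℝ) / ((d : ℝ) - 1) * (d : ℝ) ^ n| ≤ 1 := by
  have hX1 : (1 : ℝ) < (d : ℝ) := by exact_mod_cast (by omega : 1 < d)
  have hX2 : (2 : ℝ) ≤ (d : ℝ) := by exact_mod_cast hd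
  have hcast : ((∑ k ∈ Finset.range (n + 1), d ^ k : ℕ) : ℝ)
      = ∑ k ∈ Finset.range (n + 1), (d : ℝ) ^ k := by
    push_cast
    rfl
  rw [hcast, geom_sum_eq (ne_of_gt hX1) (n + 1)]
  rw [show ((d : ℝ) ^ (n + 1) - 1) / ((d : ℝ) - 1) - (d : ℝ) / ((d : ℝ) - 1) * (d : ℝ) ^ n
      = -(1 / ((d : ℝ) - 1)) from by field_simp; ring]
  rw [abs_neg, abs_of_nonneg (le_of_lt (div_pos one_pos (by linarith)))]
  rw [div_le_one (by linarith)]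
  linarith

lemma ratio_tendsto {d : ℕ} (hd : 2 ≤ d) {ℓ : ℕ} (hl : 1 ≤ ℓ) :
    Tendsto (fun n : ℕ => (covC d n ℓ : ℝ) / ((∑ k ∈ Finset.range (n + 1), d ^ k : ℕ) : ℝ))
      atTop (nhds ((d : ℝ) ^ (ℓ - 1 - (ℓ - 1) / 2) * ((d : ℝ) - 1) / ((d : ℝ) ^ ℓ - 1))) := by
  have hX1 : (1 : ℝ) < (d : ℝ) := by exact_mod_cast (by omega : 1 < d)
  have hX0 : (0 : ℝ) < (d : ℝ) := by linarith
  have hXl2 : (2 : ℝ) ≤ (d : ℝ) ^ ℓ := by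
    calc (2 : ℝ) ≤ (d : ℝ) := by exact_mod_cast hd
    _ ≤ (d : ℝ) ^ ℓ := le_self_pow₀ (le_of_lt hX1) (by omega)
  have hD : (0 : ℝ) < (d : ℝ) ^ ℓ - 1 := by linarith
  have hpow := tendsto_pow_atTop_atTop_of_one_lt hX1
  have t1 : Tendsto (fun n : ℕ => (covC d n ℓ : ℝ) / (d : ℝ) ^ n) atTop
      (nhds ((d : ℝ) ^ (ℓ - (ℓ - 1) / 2) / ((d : ℝ) ^ ℓ - 1))) := by
    rw [← tendsto_sub_nhds_zero_iff]
    apply squeeze_zero_norm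
      (a := fun n : ℕ => ((d : ℝ) ^ ℓ + (d : ℝ) ^ (2 * ℓ)) / (d : ℝ) ^ n)
    · intro n
      have hxn : (0 : ℝ) < (d : ℝ) ^ n := pow_pos hX0 n
      rw [show (covC d n ℓ : ℝ) / (d : ℝ) ^ n - (d : ℝ) ^ (ℓ - (ℓ - 1) / 2) / ((d : ℝ) ^ ℓ - 1)
          = ((covC d n ℓ : ℝ) - (d : ℝ) ^ (ℓ - (ℓ - 1) / 2) / ((d : ℝ) ^ ℓ - 1) * (d : ℝ) ^ n)
            / (d : ℝ) ^ n from by field_simp]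
      rw [Real.norm_eq_abs, abs_div, abs_of_pos hxn]
      gcongr
      exact covC_err hd hl n
    · exact Tendsto.div_atTop tendsto_const_nhds hpow
  have t2 : Tendsto (fun n : ℕ => ((∑ k ∈ Finset.range (n + 1), d ^ k : ℕ) : ℝ) / (d : ℝ) ^ n)
      atTop (nhds ((d : ℝ) / ((d : ℝ) - 1))) := by
    rw [← tendsto_sub_nhds_zero_iff]
    apply squeeze_zero_norm (a := fun n : ℕ => 1 / (d : ℝ) ^ n)
    · intro n
      have hxn : (0 : ℝ) < (d : ℝ) ^ n := pow_pos hX0 n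
      rw [show ((∑ k ∈ Finset.range (n + 1), d ^ k : ℕ) : ℝ) / (d : ℝ) ^ n
          - (d : ℝ) / ((d : ℝ) - 1)
          = (((∑ k ∈ Finset.range (n + 1), d ^ k : ℕ) : ℝ)
            - (d : ℝ) / ((d : ℝ) - 1) * (d : ℝ) ^ n) / (d : ℝ) ^ n from by field_simp]
      rw [Real.norm_eq_abs, abs_div, abs_of_pos hxn]
      gcongr
      exact G_err hd n
    · exact Tendsto.div_atTop tendsto_const_nhds hpow
  have hA' : ((d : ℝ) / ((d : ℝ) - 1)) ≠ 0 := ne_of_gt (div_pos hX0 (by linarith))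
  have t3 := t1.div t2 hA'
  have heq : ∀ n : ℕ, ((covC d n ℓ : ℝ) / (d : ℝ) ^ n)
      / (((∑ k ∈ Finset.range (n + 1), d ^ k : ℕ) : ℝ) / (d : ℝ) ^ n)
      = (covC d n ℓ : ℝ) / ((∑ k ∈ Finset.range (n + 1), d ^ k : ℕ) : ℝ) := by
    intro n
    have hxn : ((d : ℝ) ^ n) ≠ 0 := ne_of_gt (pow_pos hX0 n)
    have hGn : ((∑ k ∈ Finset.range (n + 1), d ^ k : ℕ) : ℝ) ≠ 0 := by
      have := G_one_le d n hd
      exact_mod_cast (by omega : (∑ k ∈ Finset.range (n + 1), d ^ k : ℕ) ≠ 0)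
    field_simp
  have t4 := t3.congr heq
  have hval : ((d : ℝ) ^ (ℓ - (ℓ - 1) / 2) / ((d : ℝ) ^ ℓ - 1)) / ((d : ℝ) / ((d : ℝ) - 1))
      = (d : ℝ) ^ (ℓ - 1 - (ℓ - 1) / 2) * ((d : ℝ) - 1) / ((d : ℝ) ^ ℓ - 1) := by
    have he : ℓ - (ℓ - 1) / 2 = (ℓ - 1 - (ℓ - 1) / 2) + 1 := by omega
    rw [he, pow_succ]
    field_simp
  rwa [hval] at t4

noncomputable def Lfun (d : ℕ) : ℕ → ℝ := fun ℓ =>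
  if ℓ = 0 then 0
  else Real.log ((d : ℝ) ^ (ℓ - 1 - (ℓ - 1) / 2) * ((d : ℝ) - 1) / ((d : ℝ) ^ ℓ - 1)) / (-(ℓ : ℝ))

lemma perell {d : ℕ} (hd : 2 ≤ d) (ℓ : ℕ) :
    Tendsto (fun n : ℕ =>
        Real.log ((coveringNumber (SSTtrunc (fun _ => d) n) ℓ : ℝ) /
          (Nat.card {v : SSTVert (fun _ => d) // v.1 ≤ n} : ℝ)) / (-(ℓ : ℝ)))
      atTop (nhds (Lfun d ℓ)) := by
  have hX1 : (1 : ℝ) < (d : ℝ) := by exact_mod_cast (by omega : 1 < d)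
  rcases Nat.eq_zero_or_pos ℓ with rfl | hl
  · simp only [Lfun, if_pos rfl, Nat.cast_zero, neg_zero, div_zero]
    exact tendsto_const_nhds
  · have hXl2 : (2 : ℝ) ≤ (d : ℝ) ^ ℓ := by
      calc (2 : ℝ) ≤ (d : ℝ) := by exact_mod_cast hd
      _ ≤ (d : ℝ) ^ ℓ := le_self_pow₀ (le_of_lt hX1) (by omega)
    have hX0 : (0 : ℝ) < (d : ℝ) := by linarith
    have hR : (0 : ℝ) < (d : ℝ) ^ (ℓ - 1 - (ℓ - 1) / 2) * ((d : ℝ) - 1) / ((d : ℝ) ^ ℓ - 1) := by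
      apply div_pos (mul_pos (pow_pos hX0 _) (by linarith)) (by linarith)
    have t := ((ratio_tendsto hd hl).log (ne_of_gt hR)).div_const (-(ℓ : ℝ))
    rw [Lfun, if_neg (by omega)]
    apply t.congr
    intro n
    rw [covNum_eq n hd hl, card_trunc]

lemma Lfun_tendsto {d : ℕ} (hd : 2 ≤ d) :
    Tendsto (Lfun d) atTop (nhds (Real.log d / 2)) := by
  have hX1 : (1 : ℝ) < (d : ℝ) := by exact_mod_cast (by omega : 1 < d)
  have hX0 : (0 : ℝ) < (d : ℝ) := by linarith
  have hX2 : (2 : ℝ) ≤ (d : ℝ) := by exact_mod_cast hd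
  have hlogX : (0 : ℝ) < Real.log d := Real.log_pos hX1
  have hlog2 : (0 : ℝ) < Real.log 2 := Real.log_pos (by norm_num)
  have hlogX1 : (0 : ℝ) ≤ Real.log ((d : ℝ) - 1) := Real.log_nonneg (by linarith)
  set K := Real.log 2 + Real.log d + Real.log ((d : ℝ) - 1) with hK
  have key : ∀ ℓ : ℕ, 1 ≤ ℓ → |Lfun d ℓ - Real.log d / 2| ≤ K / ℓ := by
    intro ℓ hl
    have hXl2 : (2 : ℝ) ≤ (d : ℝ) ^ ℓ := by
      calc (2 : ℝ) ≤ (d : ℝ) := hX2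
      _ ≤ (d : ℝ) ^ ℓ := le_self_pow₀ (le_of_lt hX1) (by omega)
    have hD : (0 : ℝ) < (d : ℝ) ^ ℓ - 1 := by linarith
    have hl0 : (0 : ℝ) < (ℓ : ℝ) := by exact_mod_cast hl
    have ha2 : ℓ - 1 ≤ 2 * (ℓ - 1 - (ℓ - 1) / 2) ∧ 2 * (ℓ - 1 - (ℓ - 1) / 2) ≤ ℓ := by omega
    have ha2' : (ℓ : ℝ) - 1 ≤ 2 * ((ℓ - 1 - (ℓ - 1) / 2 : ℕ) : ℝ)
        ∧ 2 * ((ℓ - 1 - (ℓ - 1) / 2 : ℕ) : ℝ) ≤ (ℓ : ℝ) := by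
      constructor
      · have := ha2.1
        have hc : ((ℓ - 1 : ℕ) : ℝ) ≤ 2 * ((ℓ - 1 - (ℓ - 1) / 2 : ℕ) : ℝ) := by exact_mod_cast this
        have : ((ℓ - 1 : ℕ) : ℝ) = (ℓ : ℝ) - 1 := by
          have : (1:ℕ) ≤ ℓ := hl
          push_cast [Nat.cast_sub this]
          ring
        linarith
      · exact_mod_cast ha2.2
    have hlogR : Real.log ((d : ℝ) ^ (ℓ - 1 - (ℓ - 1) / 2) * ((d : ℝ) - 1) / ((d : ℝ) ^ ℓ - 1))
        = ((ℓ - 1 - (ℓ - 1) / 2 : ℕ) : ℝ) * Real.log d + Real.log ((d : ℝ) - 1)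
          - Real.log ((d : ℝ) ^ ℓ - 1) := by
      rw [Real.log_div (ne_of_gt (mul_pos (pow_pos hX0 _) (by linarith))) (ne_of_gt hD),
        Real.log_mul (ne_of_gt (pow_pos hX0 _)) (by linarith : ((d : ℝ) - 1) ≠ 0), Real.log_pow]
    have hlogD_up : Real.log ((d : ℝ) ^ ℓ - 1) ≤ (ℓ : ℝ) * Real.log d := by
      calc Real.log ((d : ℝ) ^ ℓ - 1) ≤ Real.log ((d : ℝ) ^ ℓ) := by
            rw [Real.log_le_log_iff (by linarith) (pow_pos hX0 _)]
            linarith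
      _ = (ℓ : ℝ) * Real.log d := by rw [Real.log_pow]
    have hlogD_lo : (ℓ : ℝ) * Real.log d - Real.log 2 ≤ Real.log ((d : ℝ) ^ ℓ - 1) := by
      have h1 : (d : ℝ) ^ ℓ / 2 ≤ (d : ℝ) ^ ℓ - 1 := by linarith
      calc (ℓ : ℝ) * Real.log d - Real.log 2 = Real.log ((d : ℝ) ^ ℓ / 2) := by
            rw [Real.log_div (ne_of_gt (pow_pos hX0 _)) (by norm_num), Real.log_pow]
      _ ≤ Real.log ((d : ℝ) ^ ℓ - 1) := by
            rw [Real.log_le_log_iff (by linarith [pow_pos hX0 ℓ]) (by linarith)]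
            exact h1
    have hLf : Lfun d ℓ - Real.log d / 2 =
        -(Real.log ((d : ℝ) ^ (ℓ - 1 - (ℓ - 1) / 2) * ((d : ℝ) - 1) / ((d : ℝ) ^ ℓ - 1))
          + (ℓ : ℝ) / 2 * Real.log d) / ℓ := by
      rw [Lfun, if_neg (by omega)]
      set LR := Real.log ((d : ℝ) ^ (ℓ - 1 - (ℓ - 1) / 2) * ((d : ℝ) - 1) / ((d : ℝ) ^ ℓ - 1))
        with hLR
      have hlne : (ℓ : ℝ) ≠ 0 := ne_of_gt hl0
      have h2 : ((ℓ : ℝ) / 2 * Real.log d) / ℓ = Real.log d / 2 := by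
        field_simp
      calc LR / (-(ℓ : ℝ)) - Real.log d / 2 = -(LR / ℓ) - Real.log d / 2 := by rw [div_neg]
      _ = -((LR + (ℓ : ℝ) / 2 * Real.log d) / ℓ) := by rw [add_div, h2]; ring
      _ = -(LR + (ℓ : ℝ) / 2 * Real.log d) / ℓ := by rw [neg_div]
    rw [hLf, abs_div, abs_neg, abs_of_pos hl0]
    gcongr
    rw [hlogR]
    set a := ((ℓ - 1 - (ℓ - 1) / 2 : ℕ) : ℝ) with hadef
    have hp1 : (a + (ℓ : ℝ) / 2 - ℓ) * Real.log d ≤ 0 := by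
      have := mul_le_mul_of_nonneg_right
        (show a + (ℓ : ℝ) / 2 - ℓ ≤ 0 by linarith [ha2'.2]) (le_of_lt hlogX)
      simpa using this
    have hp2 : -Real.log d ≤ (a + (ℓ : ℝ) / 2 - ℓ) * Real.log d := by
      have := mul_le_mul_of_nonneg_right
        (show (-1 : ℝ) ≤ a + (ℓ : ℝ) / 2 - ℓ by linarith [ha2'.1]) (le_of_lt hlogX)
      simpa using this
    rw [abs_le]
    constructor
    · linarith [hp1, hp2, hlogD_up, hlogD_lo, hlogX1, hlog2]
    · linarith [hp1, hp2, hlogD_up, hlogD_lo, hlogX1, hlog2]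
  have h0 : Tendsto (fun ℓ : ℕ => Lfun d ℓ - Real.log d / 2) atTop (nhds 0) := by
    apply squeeze_zero_norm' (a := fun ℓ : ℕ => K / ℓ)
    · filter_upwards [eventually_ge_atTop 1] with ℓ hl
      rw [Real.norm_eq_abs]
      exact key ℓ hl
    · exact tendsto_const_div_atTop_nhds_zero_nat K
  have h1 := h0.add (tendsto_const_nhds (x := Real.log d / 2))
  simpa using h1

/-- For the complete `d`-ary tree (`d ≥ 2`), i.e. the spherically
symmetric tree with constant offspring sequence `f ≡ d`: the growth rate
`lim_n L_n^{1/n}` exists and equals `d`, and the transfinite fractal dimension of the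
truncation sequence `{T_n}` exists (as an iterated limit) and equals `(log d)/2`. -/
theorem dary_growth_and_dimension (d : ℕ) (hd : 2 ≤ d) :
    Tendsto (fun n : ℕ => (SSTgen (fun _ => d) n : ℝ) ^ ((n : ℝ)⁻¹))
      atTop (nhds (d : ℝ)) ∧
    ∃ L : ℕ → ℝ,
      (∀ ℓ : ℕ, Tendsto (fun n : ℕ =>
          Real.log ((coveringNumber (SSTtrunc (fun _ => d) n) ℓ : ℝ) /
            (Nat.card {v : SSTVert (fun _ => d) // v.1 ≤ n} : ℝ)) / (-(ℓ : ℝ)))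
        atTop (nhds (L ℓ))) ∧
      Tendsto L atTop (nhds (Real.log d / 2)) := by
  exact ⟨growth_limit d hd, Lfun d, fun ℓ => perell hd ℓ, Lfun_tendsto hd⟩
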